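/- Assume R is irreducible and let c be a Coxeter element of W. Then the linear map id_V − c restricts to a bijection from the weight lattice P onto the root lattice Q; in particular, for every q ∈ Q there exists a unique p ∈ P with q = p − c(p). -/

import Mathlib

open Module

/-- A finite, reduced, crystallographic root system spanning the `ℚ`-vector space `V`,
given together with its coroots (viewed as linear functionals via the pairing
`⟨·, α^∨⟩`). -/
structure RootSystemData (V : Type*) [AddCommGroup V] [Module ℚ V] where
  /-- The set of roots `R ⊆ V`. -/
  roots : Set V
  finite : roots.Finite
  zero_not_mem : (0 : V) ∉ roots
  span_eq_top : Submodule.span ℚ roots = ⊤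
  /-- The coroot pairing `x ↦ ⟨x, α^∨⟩`. -/
  coroot : V → (V →ₗ[ℚ] ℚ)
  coroot_self : ∀ α ∈ roots, coroot α α = 2
  /-- Each reflection `s_α : x ↦ x - ⟨x, α^∨⟩α` maps `R` into itself. -/
  reflection_mem : ∀ α ∈ roots, ∀ β ∈ roots, β - coroot α β • α ∈ roots
  /-- Crystallographic condition: `⟨β, α^∨⟩ ∈ ℤ` for all roots `α, β`. -/
  crystallographic : ∀ α ∈ roots, ∀ β ∈ roots, ∃ n : ℤ, coroot α β = (n : ℚ)
  /-- Reduced: the only multiples of a root `α` which are roots are `±α`. -/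
  reduced : ∀ α ∈ roots, ∀ t : ℚ, t • α ∈ roots → t = 1 ∨ t = -1

namespace RootSystemData

variable {V : Type*} [AddCommGroup V] [Module ℚ V] (RS : RootSystemData V)

/-- The reflection `s_α` in a root `α`, as a linear endomorphism of `V`. -/
def reflMap (α : V) : V →ₗ[ℚ] V :=
  LinearMap.id - LinearMap.smulRight (RS.coroot α) α

lemma reflMap_apply (α x : V) : RS.reflMap α x = x - RS.coroot α x • α := rfl

lemma reflMap_reflMap {α : V} (h2 : RS.coroot α α = 2) (x : V) :
    RS.reflMap α (RS.reflMap α x) = x := by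
  rw [reflMap_apply, reflMap_apply, map_sub, map_smul, smul_eq_mul, h2, sub_smul, mul_smul]
  have : (2 : ℚ) • α = α + α := two_smul ℚ α
  rw [this]
  rw [smul_add]
  abel

/-- The reflection `s_α` in a root `α`, as a linear automorphism of `V`. -/
def refl (α : V) (hα : α ∈ RS.roots) : V ≃ₗ[ℚ] V :=
  LinearEquiv.ofLinear (RS.reflMap α) (RS.reflMap α)
    (by ext x; exact RS.reflMap_reflMap (RS.coroot_self α hα) x)
    (by ext x; exact RS.reflMap_reflMap (RS.coroot_self α hα) x)

/-- The Weyl group of the root system: the subgroup of `GL(V)` generated by the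
reflections in the roots. -/
def weylGroup : Subgroup (V ≃ₗ[ℚ] V) :=
  Subgroup.closure {w | ∃ (α : V) (hα : α ∈ RS.roots), w = RS.refl α hα}

/-- A base (system of simple roots) of the root system: a linearly independent spanning
subset of `R` such that every root is a linear combination of base elements with integer
coefficients which are either all nonnegative or all nonpositive. -/
structure IsBase (Δ : Finset V) : Prop where
  subset : ↑Δ ⊆ RS.roots
  indep : LinearIndependent ℚ (fun x : (Δ : Set V) => (x : V))
  span_eq_top : Submodule.span ℚ (Δ : Set V) = ⊤
  pos_or_neg : ∀ β ∈ RS.roots,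
    (∃ f : V → ℕ, β = ∑ α ∈ Δ, (f α : ℚ) • α) ∨
    (∃ f : V → ℕ, β = -∑ α ∈ Δ, (f α : ℚ) • α)

/-- A Coxeter element of the Weyl group: a product of the reflections in the simple roots
of some base, each simple root occurring exactly once, in some order. -/
def IsCoxeterElement (c : V ≃ₗ[ℚ] V) : Prop :=
  ∃ (Δ : Finset V) (hΔ : RS.IsBase Δ) (l : List {x // x ∈ Δ}),
    l.Nodup ∧ (∀ α : {x // x ∈ Δ}, α ∈ l) ∧
    c = (l.map fun α => RS.refl α.1 (hΔ.subset α.2)).prod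

/-- Irreducibility of the root system: `R` admits no decomposition into two nonempty
mutually orthogonal subsets (orthogonality expressed via the coroot pairing). -/
def IsIrreducible : Prop :=
  ∀ R₁ R₂ : Set V, R₁ ∪ R₂ = RS.roots →
    (∀ α ∈ R₁, ∀ β ∈ R₂, RS.coroot α β = 0) → R₁ = ∅ ∨ R₂ = ∅

/-- The root lattice `Q`: the subgroup of `V` generated by the roots. -/
def rootLattice : AddSubgroup V := AddSubgroup.closure RS.roots

/-- The weight lattice `P = {x ∈ V : ⟨x, α^∨⟩ ∈ ℤ for every root α}`. -/
def weightLattice : AddSubgroup V where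
  carrier := {x : V | ∀ α ∈ RS.roots, ∃ n : ℤ, RS.coroot α x = (n : ℚ)}
  zero_mem' := fun α _ => ⟨0, by simp⟩
  add_mem' := by
    rintro x y hx hy α hα
    obtain ⟨n, hn⟩ := hx α hα
    obtain ⟨m, hm⟩ := hy α hα
    exact ⟨n + m, by rw [map_add, hn, hm]; push_cast; ring⟩
  neg_mem' := by
    rintro x hx α hα
    obtain ⟨n, hn⟩ := hx α hα
    exact ⟨-n, by rw [map_neg, hn]; push_cast; ring⟩

end RootSystemData

section Part1

namespace RootSystemData

variable {V : Type*} [AddCommGroup V] [Module ℚ V] (RS : RootSystemData V)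

lemma refl_apply (α : V) (hα : α ∈ RS.roots) (x : V) :
    RS.refl α hα x = x - RS.coroot α x • α := rfl

lemma mul_apply' (e₁ e₂ : V ≃ₗ[ℚ] V) (x : V) : (e₁ * e₂) x = e₁ (e₂ x) := rfl

lemma one_apply' (x : V) : (1 : V ≃ₗ[ℚ] V) x = x := rfl

lemma inv_apply' (e : V ≃ₗ[ℚ] V) (x : V) : e⁻¹ x = e.symm x := rfl

lemma refl_symm (α : V) (hα : α ∈ RS.roots) : (RS.refl α hα).symm = RS.refl α hα := rfl

lemma refl_inv (α : V) (hα : α ∈ RS.roots) : (RS.refl α hα)⁻¹ = RS.refl α hα := rfl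

lemma root_ne_zero {α : V} (hα : α ∈ RS.roots) : α ≠ 0 := fun h => RS.zero_not_mem (h ▸ hα)

lemma refl_root_mem {α β : V} (hα : α ∈ RS.roots) (hβ : β ∈ RS.roots) :
    RS.refl α hα β ∈ RS.roots := RS.reflection_mem α hα β hβ

lemma refl_self_eq_neg {α : V} (hα : α ∈ RS.roots) : RS.refl α hα α = -α := by
  rw [refl_apply, RS.coroot_self α hα, two_smul]; abel

lemma neg_root_mem {α : V} (hα : α ∈ RS.roots) : -α ∈ RS.roots := by
  have := RS.refl_root_mem hα hα
  rwa [RS.refl_self_eq_neg hα] at this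

lemma refl_mem_weylGroup (α : V) (hα : α ∈ RS.roots) : RS.refl α hα ∈ RS.weylGroup :=
  Subgroup.subset_closure ⟨α, hα, rfl⟩

/-- Elements of the Weyl group preserve the set of roots. -/
lemma weylGroup_maps_roots : ∀ w ∈ RS.weylGroup, (∀ α ∈ RS.roots, w α ∈ RS.roots) ∧
    (∀ α ∈ RS.roots, w⁻¹ α ∈ RS.roots) := by
  intro w hw
  induction hw using Subgroup.closure_induction with
  | mem x hx =>
    obtain ⟨α, hα, rfl⟩ := hx
    rw [RS.refl_inv]
    exact ⟨fun β hβ => RS.refl_root_mem hα hβ, fun β hβ => RS.refl_root_mem hα hβ⟩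
  | one => exact ⟨fun β hβ => hβ, fun β hβ => hβ⟩
  | mul x y hx hy ihx ihy =>
    refine ⟨fun β hβ => ?_, fun β hβ => ?_⟩
    · rw [mul_apply']; exact ihx.1 _ (ihy.1 _ hβ)
    · rw [mul_inv_rev, mul_apply']; exact ihy.2 _ (ihx.2 _ hβ)
  | inv x hx ihx => exact ⟨ihx.2, by simpa using ihx.1⟩

lemma weylGroup_root_mem {w : V ≃ₗ[ℚ] V} (hw : w ∈ RS.weylGroup) {α : V} (hα : α ∈ RS.roots) :
    w α ∈ RS.roots := (RS.weylGroup_maps_roots w hw).1 α hα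

instance : Finite RS.weylGroup := by
  have hR : Finite RS.roots := RS.finite
  have hinj : Function.Injective
      (fun w : RS.weylGroup => fun α : RS.roots => (⟨w.1 α.1,
        RS.weylGroup_root_mem w.2 α.2⟩ : RS.roots)) := by
    intro w v h
    have h' : ∀ α ∈ RS.roots, w.1 α = v.1 α := by
      intro α hα
      have := congrFun h ⟨α, hα⟩
      exact congrArg Subtype.val this
    have : (w.1 : V →ₗ[ℚ] V) = v.1 := by
      apply LinearMap.ext_on RS.span_eq_top
      intro x hx
      exact h' x hx
    ext1
    exact LinearEquiv.toLinearMap_injective this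
  exact Finite.of_injective _ hinj

end RootSystemData

end Part1
section Part2

namespace RootSystemData

variable {V : Type*} [AddCommGroup V] [Module ℚ V] [FiniteDimensional ℚ V]
  (RS : RootSystemData V)

/-- An auxiliary positive definite bilinear form coming from a basis. -/
noncomputable def B0 (RS : RootSystemData V) : V →ₗ[ℚ] V →ₗ[ℚ] ℚ :=
  LinearMap.mk₂ ℚ
    (fun u v => ∑ i, (Module.finBasis ℚ V).repr u i * (Module.finBasis ℚ V).repr v i)
    (by intro m₁ m₂ n; simp [add_mul, Finset.sum_add_distrib])
    (by intro c m n; simp [Finset.mul_sum, mul_assoc])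
    (by intro m n₁ n₂; simp [mul_add, Finset.sum_add_distrib])
    (by intro c m n; simp [Finset.mul_sum]; exact Finset.sum_congr rfl fun i _ => by ring)

lemma B0_nonneg (x : V) : 0 ≤ RS.B0 x x := by
  have : RS.B0 x x = ∑ i, (Module.finBasis ℚ V).repr x i * (Module.finBasis ℚ V).repr x i := rfl
  rw [this]
  exact Finset.sum_nonneg fun i _ => mul_self_nonneg _

lemma B0_eq_zero {x : V} (h : RS.B0 x x = 0) : x = 0 := by
  have h' : ∑ i, (Module.finBasis ℚ V).repr x i * (Module.finBasis ℚ V).repr x i = 0 := h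
  have hz : ∀ i ∈ Finset.univ, (Module.finBasis ℚ V).repr x i * (Module.finBasis ℚ V).repr x i = 0 :=
    (Finset.sum_eq_zero_iff_of_nonneg fun i _ => mul_self_nonneg _).mp h'
  have : (Module.finBasis ℚ V).repr x = 0 := by
    ext i
    exact mul_self_eq_zero.mp (hz i (Finset.mem_univ i))
  have := congrArg (Module.finBasis ℚ V).repr.symm this
  simpa using this

noncomputable instance : Fintype RS.weylGroup := Fintype.ofFinite _

/-- A Weyl-group-invariant positive definite bilinear form. -/
noncomputable def B : V →ₗ[ℚ] V →ₗ[ℚ] ℚ :=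
  LinearMap.mk₂ ℚ
    (fun u v => ∑ w : RS.weylGroup, RS.B0 (w.1 u) (w.1 v))
    (by intro m₁ m₂ n; simp [Finset.sum_add_distrib])
    (by intro c m n; simp [smul_eq_mul, Finset.mul_sum])
    (by intro m n₁ n₂; simp [Finset.sum_add_distrib])
    (by intro c m n; simp [smul_eq_mul, Finset.mul_sum])

lemma B_apply (u v : V) : RS.B u v = ∑ w : RS.weylGroup, RS.B0 (w.1 u) (w.1 v) := rfl

lemma B_invariant {w : V ≃ₗ[ℚ] V} (hw : w ∈ RS.weylGroup) (u v : V) :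
    RS.B (w u) (w v) = RS.B u v := by
  rw [B_apply, B_apply]
  refine Fintype.sum_equiv (Equiv.mulRight (⟨w, hw⟩ : RS.weylGroup)) _ _ fun x => ?_
  simp only [Equiv.coe_mulRight, Subgroup.coe_mul, mul_apply']

lemma B_pos {x : V} (hx : x ≠ 0) : 0 < RS.B x x := by
  have hnn : ∀ w : RS.weylGroup, 0 ≤ RS.B0 (w.1 x) (w.1 x) := fun w => RS.B0_nonneg _
  have hle : 0 ≤ RS.B x x := Finset.sum_nonneg fun w _ => hnn w
  rcases lt_or_eq_of_le hle with h | h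
  · exact h
  · exfalso
    have hz : ∀ w ∈ (Finset.univ : Finset RS.weylGroup), RS.B0 (w.1 x) (w.1 x) = (0:ℚ) :=
      (Finset.sum_eq_zero_iff_of_nonneg fun w _ => hnn w).mp h.symm
    have h1 := hz (1 : RS.weylGroup) (Finset.mem_univ _)
    rw [OneMemClass.coe_one, one_apply'] at h1
    exact hx (RS.B0_eq_zero h1)

lemma B_root_pos {α : V} (hα : α ∈ RS.roots) : 0 < RS.B α α :=
  RS.B_pos (RS.root_ne_zero hα)

/-- The key formula: the coroot pairing is computed by the invariant form. -/
lemma coroot_mul_B (α : V) (hα : α ∈ RS.roots) (v : V) :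
    RS.coroot α v * RS.B α α = 2 * RS.B v α := by
  have hinv := RS.B_invariant (RS.refl_mem_weylGroup α hα) v α
  rw [RS.refl_apply α hα v, RS.refl_self_eq_neg hα] at hinv
  have hexp : RS.B (v - RS.coroot α v • α) (-α)
      = -(RS.B v α) + RS.coroot α v * RS.B α α := by
    simp only [map_sub, map_neg, map_smul, LinearMap.sub_apply, LinearMap.smul_apply,
      LinearMap.neg_apply, smul_eq_mul]
    ring
  rw [hexp] at hinv
  linarith

lemma coroot_eq_of_B (α : V) (hα : α ∈ RS.roots) (v : V) :
    RS.coroot α v = 2 * RS.B v α / RS.B α α := by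
  field_simp [ne_of_gt (RS.B_root_pos hα)]
  exact RS.coroot_mul_B α hα v

/-- Coroots transform contravariantly under the Weyl group. -/
lemma coroot_weyl {w : V ≃ₗ[ℚ] V} (hw : w ∈ RS.weylGroup) {α : V} (hα : α ∈ RS.roots)
    (v : V) : RS.coroot (w α) v = RS.coroot α (w⁻¹ v) := by
  have hwα : w α ∈ RS.roots := RS.weylGroup_root_mem hw hα
  have h1 : RS.B (w α) (w α) = RS.B α α := RS.B_invariant hw α α
  have h2 : RS.B v (w α) = RS.B (w⁻¹ v) α := by
    have : w (w⁻¹ v) = v := by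
      rw [← mul_apply', mul_inv_cancel, one_apply']
    conv_lhs => rw [← this]
    exact RS.B_invariant hw _ α
  rw [RS.coroot_eq_of_B (w α) hwα v, RS.coroot_eq_of_B α hα (w⁻¹ v), h1, h2]

end RootSystemData

end Part2
section Part3

namespace RootSystemData

variable {V : Type*} [AddCommGroup V] [Module ℚ V] [FiniteDimensional ℚ V]
  (RS : RootSystemData V)

lemma refl_refl (α : V) (hα : α ∈ RS.roots) (x : V) :
    RS.refl α hα (RS.refl α hα x) = x := by
  conv_lhs => rw [show RS.refl α hα x = (RS.refl α hα).symm x from by rw [RS.refl_symm]]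
  exact (RS.refl α hα).apply_symm_apply x

variable (Δ : Finset V)

/-- The simple reflection attached to an element of the base. -/
def sRefl (hΔ : RS.IsBase Δ) (a : {x // x ∈ Δ}) : V ≃ₗ[ℚ] V :=
  RS.refl a.1 (hΔ.subset a.2)

lemma sRefl_apply (hΔ : RS.IsBase Δ) (a : {x // x ∈ Δ}) (x : V) :
    RS.sRefl Δ hΔ a x = x - RS.coroot a.1 x • a.1 := rfl

lemma sRefl_mem_weylGroup (hΔ : RS.IsBase Δ) (a : {x // x ∈ Δ}) : RS.sRefl Δ hΔ a ∈ RS.weylGroup :=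
  RS.refl_mem_weylGroup _ _

lemma listProd_mem_weylGroup (hΔ : RS.IsBase Δ) (t : List {x // x ∈ Δ}) :
    (t.map (RS.sRefl Δ hΔ)).prod ∈ RS.weylGroup := by
  apply list_prod_mem
  intro x hx
  obtain ⟨a, _, rfl⟩ := List.mem_map.mp hx
  exact RS.sRefl_mem_weylGroup Δ hΔ a

/-- The basis given by the base. -/
noncomputable def baseBasis (hΔ : RS.IsBase Δ) : Basis {x // x ∈ Δ} ℚ V :=
  Basis.mk (v := fun i : {x // x ∈ Δ} => (i.1 : V)) hΔ.indep
    (by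
      rw [show (Set.range fun i : {x // x ∈ Δ} => (i.1 : V)) = (Δ : Set V) from
        Subtype.range_coe_subtype]
      rw [hΔ.span_eq_top])

lemma baseBasis_apply (hΔ : RS.IsBase Δ) (i : {x // x ∈ Δ}) : RS.baseBasis Δ hΔ i = i.1 := Basis.mk_apply _ _ _

/-- Uniqueness of coefficients in terms of the base. -/
lemma coeff_eq (hΔ : RS.IsBase Δ) {f g : V → ℚ}
    (h : ∑ α ∈ Δ, f α • α = ∑ α ∈ Δ, g α • α) : ∀ α ∈ Δ, f α = g α := by
  have hsum : ∑ i : {x // x ∈ Δ}, (f i.1 - g i.1) • (i.1 : V) = 0 := by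
    simp only [sub_smul]
    rw [Finset.sum_sub_distrib]
    rw [Finset.sum_coe_sort Δ (fun α => f α • α), Finset.sum_coe_sort Δ (fun α => g α • α), h]
    abel
  have := Fintype.linearIndependent_iff.mp hΔ.indep (fun i => f i.1 - g i.1) hsum
  intro α hα
  have h' : f α - g α = 0 := this ⟨α, hα⟩
  linarith

/-- The coroot-evaluation map `x ↦ (⟨x, α_i^∨⟩)_i`. -/
noncomputable def corootPi : V →ₗ[ℚ] ({x // x ∈ Δ} → ℚ) :=
  LinearMap.pi (fun i : {x // x ∈ Δ} => RS.coroot i.1)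

lemma corootPi_injective (hΔ : RS.IsBase Δ) : Function.Injective (RS.corootPi Δ) := by
  rw [← LinearMap.ker_eq_bot]
  rw [Submodule.eq_bot_iff]
  intro x hx
  rw [LinearMap.mem_ker] at hx
  have hcz : ∀ i : {x // x ∈ Δ}, RS.coroot i.1 x = 0 := fun i => congrFun hx i
  have hBz : ∀ i : {x // x ∈ Δ}, RS.B x i.1 = 0 := by
    intro i
    have hroot := hΔ.subset i.2
    have := RS.coroot_mul_B i.1 hroot x
    rw [hcz i] at this
    have hpos := RS.B_root_pos hroot
    nlinarith
  have hker : (Δ : Set V) ⊆ (LinearMap.ker (RS.B x) : Set V) := by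
    intro v hv
    exact hBz ⟨v, hv⟩
  have : Submodule.span ℚ (Δ : Set V) ≤ LinearMap.ker (RS.B x) := Submodule.span_le.mpr hker
  rw [hΔ.span_eq_top] at this
  have hxx : RS.B x x = 0 := this Submodule.mem_top
  by_contra hne
  exact absurd hxx (ne_of_gt (RS.B_pos hne))

lemma corootPi_surjective (hΔ : RS.IsBase Δ) : Function.Surjective (RS.corootPi Δ) := by
  haveI : Fintype {x // x ∈ Δ} := FinsetCoe.fintype Δ
  have hfr : Module.finrank ℚ V = Module.finrank ℚ ({x // x ∈ Δ} → ℚ) := by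
    rw [Module.finrank_eq_card_basis (RS.baseBasis Δ hΔ), Module.finrank_fintype_fun_eq_card]
  exact (LinearMap.injective_iff_surjective_of_finrank_eq_finrank hfr).mp
    (RS.corootPi_injective Δ hΔ)

/-- The target of the fundamental weight: the indicator function. -/
noncomputable def omegaTarget (i : {x // x ∈ Δ}) : {x // x ∈ Δ} → ℚ :=
  open Classical in fun j => if j = i then 1 else 0

lemma omegaTarget_self (i : {x // x ∈ Δ}) : omegaTarget Δ i i = 1 := if_pos rfl

lemma omegaTarget_ne {i j : {x // x ∈ Δ}} (h : j ≠ i) : omegaTarget Δ i j = 0 := if_neg h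

/-- The "fundamental weights" dual to the simple coroots. -/
noncomputable def omega (hΔ : RS.IsBase Δ) (i : {x // x ∈ Δ}) : V :=
  (RS.corootPi_surjective Δ hΔ (omegaTarget Δ i)).choose

lemma omega_spec (hΔ : RS.IsBase Δ) (i : {x // x ∈ Δ}) :
    RS.corootPi Δ (RS.omega Δ hΔ i) = omegaTarget Δ i :=
  (RS.corootPi_surjective Δ hΔ (omegaTarget Δ i)).choose_spec

lemma coroot_omega_self (hΔ : RS.IsBase Δ) (i : {x // x ∈ Δ}) :
    RS.coroot i.1 (RS.omega Δ hΔ i) = 1 := by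
  have h := congrFun (RS.omega_spec Δ hΔ i) i
  rwa [omegaTarget_self] at h

lemma coroot_omega_ne (hΔ : RS.IsBase Δ) {i j : {x // x ∈ Δ}} (h : j ≠ i) :
    RS.coroot j.1 (RS.omega Δ hΔ i) = 0 := by
  have h' := congrFun (RS.omega_spec Δ hΔ i) j
  rwa [omegaTarget_ne Δ h] at h'

/-- The `ℤ`-span of the simple coroots inside `V →ₗ[ℚ] ℚ`. -/
def corootSpan : AddSubgroup (V →ₗ[ℚ] ℚ) :=
  AddSubgroup.closure (Set.range fun a : {x // x ∈ Δ} => RS.coroot a.1)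

lemma corootSpan_int_eval (x : V) (hx : ∀ a : {x // x ∈ Δ}, ∃ n : ℤ, RS.coroot a.1 x = n) :
    ∀ f ∈ RS.corootSpan Δ, ∃ n : ℤ, f x = n := by
  intro f hf
  induction hf using AddSubgroup.closure_induction with
  | mem g hg => obtain ⟨a, rfl⟩ := hg; exact hx a
  | zero => exact ⟨0, by simp⟩
  | add g h _ _ ihg ihh =>
    obtain ⟨n, hn⟩ := ihg
    obtain ⟨m, hm⟩ := ihh
    exact ⟨n + m, by simp [hn, hm]⟩
  | neg g _ ihg =>
    obtain ⟨n, hn⟩ := ihg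
    exact ⟨-n, by simp [hn]⟩

lemma corootSpan_int_root (hΔ : RS.IsBase Δ) {β : V} (hβ : β ∈ RS.roots) :
    ∀ f ∈ RS.corootSpan Δ, ∃ n : ℤ, f β = n := by
  apply RS.corootSpan_int_eval
  intro a
  exact RS.crystallographic a.1 (hΔ.subset a.2) β hβ

lemma corootSpan_comp_sRefl (hΔ : RS.IsBase Δ) {f : V →ₗ[ℚ] ℚ} (hf : f ∈ RS.corootSpan Δ)
    (a : {x // x ∈ Δ}) : f ∘ₗ (RS.sRefl Δ hΔ a).toLinearMap ∈ RS.corootSpan Δ := by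
  obtain ⟨m, hm⟩ := RS.corootSpan_int_root Δ hΔ (hΔ.subset a.2) f hf
  have heq : f ∘ₗ (RS.sRefl Δ hΔ a).toLinearMap = f - (m : ℤ) • RS.coroot a.1 := by
    ext v
    simp only [LinearMap.comp_apply, LinearEquiv.coe_coe, LinearMap.sub_apply,
      LinearMap.smul_apply, zsmul_eq_mul]
    rw [RS.sRefl_apply Δ hΔ a v, map_sub, map_smul, smul_eq_mul, hm]
    ring
  rw [heq]
  exact sub_mem hf (zsmul_mem (AddSubgroup.subset_closure (Set.mem_range_self a)) m)

lemma corootSpan_comp_list (hΔ : RS.IsBase Δ) {f : V →ₗ[ℚ] ℚ} (hf : f ∈ RS.corootSpan Δ)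
    (t : List {x // x ∈ Δ}) :
    f ∘ₗ ((t.map (RS.sRefl Δ hΔ)).prod).toLinearMap ∈ RS.corootSpan Δ := by
  induction t generalizing f with
  | nil => simpa using hf
  | cons a t ih =>
    have : (((a :: t).map (RS.sRefl Δ hΔ)).prod).toLinearMap
        = (RS.sRefl Δ hΔ a).toLinearMap ∘ₗ ((t.map (RS.sRefl Δ hΔ)).prod).toLinearMap := by
      rw [List.map_cons, List.prod_cons]; rfl
    rw [this, ← LinearMap.comp_assoc]
    exact ih (RS.corootSpan_comp_sRefl Δ hΔ hf a)

end RootSystemData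

end Part3
section Part4

namespace RootSystemData

variable {V : Type*} [AddCommGroup V] [Module ℚ V] [FiniteDimensional ℚ V]
  (RS : RootSystemData V) (Δ : Finset V)

/-- Every positive root (w.r.t. the base) is obtained from a simple root by applying a
product of simple reflections. -/
lemma exists_conj_aux (hΔ : RS.IsBase Δ) : ∀ n : ℕ, ∀ β ∈ RS.roots, ∀ f : V → ℕ,
    β = ∑ α ∈ Δ, (f α : ℚ) • α → ∑ α ∈ Δ, f α = n →
    ∃ (t : List {x // x ∈ Δ}) (a : {x // x ∈ Δ}),
      β = ((t.map (RS.sRefl Δ hΔ)).prod) a.1 := by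
  intro n
  induction n using Nat.strong_induction_on with
  | _ n IH =>
  intro β hβ f hf hn
  classical
  have hβ0 : β ≠ 0 := RS.root_ne_zero hβ
  have hBβ : 0 < RS.B β β := RS.B_pos hβ0
  have hexp : RS.B β β = ∑ α ∈ Δ, (f α : ℚ) * RS.B β α := by
    conv_lhs => rw [show RS.B β β = RS.B β (∑ α ∈ Δ, (f α : ℚ) • α) from by rw [← hf]]
    rw [map_sum]
    simp [smul_eq_mul]
  have hex : ∃ α ∈ Δ, 0 < (f α : ℚ) * RS.B β α := by
    by_contra hcon
    push_neg at hcon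
    have : RS.B β β ≤ 0 := hexp ▸ Finset.sum_nonpos hcon
    linarith
  obtain ⟨α, hαΔ, hpos⟩ := hex
  have hαroot : α ∈ RS.roots := hΔ.subset hαΔ
  have hfα : 0 < (f α : ℚ) := by
    rcases lt_trichotomy ((f α : ℚ)) 0 with h | h | h
    · exact absurd h (not_lt.mpr (by positivity))
    · rw [h] at hpos; simp at hpos
    · exact h
  have hBβα : 0 < RS.B β α := by nlinarith
  obtain ⟨m, hm⟩ := RS.crystallographic α hαroot β hβ
  have hcor : 0 < RS.coroot α β := by
    have h1 := RS.coroot_mul_B α hαroot β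
    have h2 := RS.B_root_pos hαroot
    nlinarith
  have hm1 : 1 ≤ m := by
    have : (0 : ℚ) < (m : ℚ) := hm ▸ hcor
    exact_mod_cast this
  by_cases hcase : ∀ j ∈ Δ, j ≠ α → f j = 0
  · -- β is a multiple of α, hence β = α
    have hβα : β = (f α : ℚ) • α := by
      rw [hf, Finset.sum_eq_single_of_mem α hαΔ]
      intro j hj hne
      rw [hcase j hj hne]
      simp
    have := RS.reduced α hαroot (f α : ℚ) (by rw [← hβα]; exact hβ)
    rcases this with h1 | h1
    · refine ⟨[], ⟨α, hαΔ⟩, ?_⟩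
      simp only [List.map_nil, List.prod_nil, one_apply']
      rw [hβα, h1, one_smul]
    · rw [h1] at hfα; norm_num at hfα
  · push_neg at hcase
    obtain ⟨j, hjΔ, hjα, hfj⟩ := hcase
    set γ := β - RS.coroot α β • α with hγdef
    have hγ : γ ∈ RS.roots := RS.reflection_mem α hαroot β hβ
    have hsplit : ∑ α' ∈ Δ, ((f α' : ℚ) - (if α' = α then (m:ℚ) else 0)) • α'
        = (∑ α' ∈ Δ, (f α' : ℚ) • α') - (m:ℚ) • α := by
      simp only [sub_smul, ite_smul, zero_smul]
      rw [Finset.sum_sub_distrib, Finset.sum_ite_eq' Δ α (fun α' => (m:ℚ) • α'), if_pos hαΔ]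
    have hγrep : γ = ∑ α' ∈ Δ, ((f α' : ℚ) - (if α' = α then (m:ℚ) else 0)) • α' := by
      rw [hsplit, ← hf, hγdef, hm]
    rcases hΔ.pos_or_neg γ hγ with ⟨g, hg⟩ | ⟨g, hg⟩
    · -- γ positive: recurse
      have hcoeff : ∀ α' ∈ Δ, (g α' : ℚ) = (f α' : ℚ) - (if α' = α then (m:ℚ) else 0) := by
        apply RS.coeff_eq Δ hΔ
        rw [← hg, hγrep]
      have hsum : (∑ α' ∈ Δ, (g α' : ℚ)) = (n : ℚ) - (m : ℚ) := by
        rw [Finset.sum_congr rfl hcoeff, Finset.sum_sub_distrib,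
          Finset.sum_ite_eq' Δ α (fun _ => (m:ℚ)), if_pos hαΔ, ← hn]
        push_cast
        ring
      have hlt : ∑ α' ∈ Δ, g α' < n := by
        have h1 : ((∑ α' ∈ Δ, g α' : ℕ) : ℚ) = (n : ℚ) - (m : ℚ) := by
          push_cast
          linarith [hsum]
        have h2 : ((∑ α' ∈ Δ, g α' : ℕ) : ℚ) < (n : ℚ) := by
          rw [h1]
          have : (1 : ℚ) ≤ (m : ℚ) := by exact_mod_cast hm1
          linarith
        exact_mod_cast h2
      obtain ⟨t, a, hta⟩ := IH _ hlt γ hγ g hg rfl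
      refine ⟨⟨α, hαΔ⟩ :: t, a, ?_⟩
      rw [List.map_cons, List.prod_cons, mul_apply', ← hta]
      -- β = s_α γ
      have hγβ : γ = RS.refl α hαroot β := by rw [RS.refl_apply]
      rw [show RS.sRefl Δ hΔ ⟨α, hαΔ⟩ = RS.refl α hαroot from rfl, hγβ, RS.refl_refl]
    · -- γ negative: impossible since the j-th coefficient stays positive
      exfalso
      have hcoeff : ∀ α' ∈ Δ, (-(g α' : ℚ)) = (f α' : ℚ) - (if α' = α then (m:ℚ) else 0) := by
        apply RS.coeff_eq Δ hΔ
        have hL : ∑ α' ∈ Δ, (-(g α' : ℚ)) • α' = γ := by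
          rw [hg]
          simp [neg_smul, Finset.sum_neg_distrib]
        rw [hL, hγrep]
      have := hcoeff j hjΔ
      rw [if_neg hjα] at this
      have h1 : (0:ℚ) < (f j : ℚ) := by exact_mod_cast Nat.pos_of_ne_zero hfj
      have h2 : (0:ℚ) ≤ (g j : ℚ) := by positivity
      linarith

/-- Every root is the image of a simple root under a product of simple reflections. -/
lemma exists_conj (hΔ : RS.IsBase Δ) {β : V} (hβ : β ∈ RS.roots) :
    ∃ (t : List {x // x ∈ Δ}) (a : {x // x ∈ Δ}),
      β = ((t.map (RS.sRefl Δ hΔ)).prod) a.1 := by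
  rcases hΔ.pos_or_neg β hβ with ⟨f, hf⟩ | ⟨f, hf⟩
  · exact RS.exists_conj_aux Δ hΔ _ β hβ f hf rfl
  · have hneg : -β ∈ RS.roots := RS.neg_root_mem hβ
    have hrep : -β = ∑ α ∈ Δ, (f α : ℚ) • α := by rw [hf, neg_neg]
    obtain ⟨t, a, hta⟩ := RS.exists_conj_aux Δ hΔ _ (-β) hneg f hrep rfl
    refine ⟨t ++ [a], a, ?_⟩
    rw [List.map_append, List.prod_append, List.map_singleton, List.prod_singleton,
      mul_apply']
    have hsa : RS.sRefl Δ hΔ a a.1 = -a.1 := RS.refl_self_eq_neg (hΔ.subset a.2)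
    rw [hsa, map_neg, ← hta, neg_neg]

/-- The coroot of any root lies in the `ℤ`-span of the simple coroots. -/
lemma coroot_mem_corootSpan (hΔ : RS.IsBase Δ) {β : V} (hβ : β ∈ RS.roots) :
    RS.coroot β ∈ RS.corootSpan Δ := by
  obtain ⟨t, a, hta⟩ := RS.exists_conj Δ hΔ hβ
  set u := (t.map (RS.sRefl Δ hΔ)).prod with hu
  have hu_mem : u ∈ RS.weylGroup := RS.listProd_mem_weylGroup Δ hΔ t
  have haroot : a.1 ∈ RS.roots := hΔ.subset a.2
  have hkey : RS.coroot β = RS.coroot a.1 ∘ₗ (u⁻¹).toLinearMap := by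
    ext v
    rw [hta]
    exact RS.coroot_weyl hu_mem haroot v
  have hui : u⁻¹ = ((t.reverse).map (RS.sRefl Δ hΔ)).prod := by
    rw [hu, List.prod_inv_reverse]
    congr 1
    rw [List.map_map]
    have hcomp : (Inv.inv ∘ RS.sRefl Δ hΔ) = RS.sRefl Δ hΔ := funext fun a' => RS.refl_inv _ _
    rw [hcomp]
    exact List.map_reverse.symm
  rw [hkey, hui]
  exact RS.corootSpan_comp_list Δ hΔ (AddSubgroup.subset_closure (Set.mem_range_self a)) _

end RootSystemData

end Part4
section Part5

namespace RootSystemData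

variable {V : Type*} [AddCommGroup V] [Module ℚ V] [FiniteDimensional ℚ V]
  (RS : RootSystemData V)

lemma roots_subset_rootLattice : RS.roots ⊆ RS.rootLattice := AddSubgroup.subset_closure

lemma coroot_int_on_rootLattice {α : V} (hα : α ∈ RS.roots) :
    ∀ q ∈ RS.rootLattice, ∃ m : ℤ, RS.coroot α q = m := by
  intro q hq
  induction hq using AddSubgroup.closure_induction with
  | mem x hx => exact RS.crystallographic α hα x hx
  | zero => exact ⟨0, by simp⟩
  | add x y _ _ ihx ihy =>
    obtain ⟨n, hn⟩ := ihx; obtain ⟨m, hm⟩ := ihy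
    exact ⟨n + m, by simp [hn, hm]⟩
  | neg x _ ihx =>
    obtain ⟨n, hn⟩ := ihx
    exact ⟨-n, by simp [hn]⟩

lemma mem_weightLattice_iff {x : V} :
    x ∈ RS.weightLattice ↔ ∀ α ∈ RS.roots, ∃ n : ℤ, RS.coroot α x = n := Iff.rfl

/-- Elements of the Weyl group preserve the root lattice, and move weight-lattice
elements by root-lattice elements. -/
lemma weylGroup_lattice : ∀ w ∈ RS.weylGroup,
    ((∀ q ∈ RS.rootLattice, w q ∈ RS.rootLattice ∧ w⁻¹ q ∈ RS.rootLattice) ∧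
     (∀ p ∈ RS.weightLattice, p - w p ∈ RS.rootLattice ∧ p - w⁻¹ p ∈ RS.rootLattice)) := by
  intro w hw
  induction hw using Subgroup.closure_induction with
  | mem x hx =>
    obtain ⟨α, hα, rfl⟩ := hx
    have hrefl : ∀ q ∈ RS.rootLattice, RS.refl α hα q ∈ RS.rootLattice := by
      intro q hq
      obtain ⟨m, hm⟩ := RS.coroot_int_on_rootLattice hα q hq
      rw [RS.refl_apply, hm, Int.cast_smul_eq_zsmul]
      exact sub_mem hq (zsmul_mem (RS.roots_subset_rootLattice hα) m)
    have hmove : ∀ p ∈ RS.weightLattice, p - RS.refl α hα p ∈ RS.rootLattice := by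
      intro p hp
      obtain ⟨m, hm⟩ := hp α hα
      rw [RS.refl_apply, hm, Int.cast_smul_eq_zsmul]
      have : p - (p - (m : ℤ) • α) = (m : ℤ) • α := by abel
      rw [this]
      exact zsmul_mem (RS.roots_subset_rootLattice hα) m
    rw [RS.refl_inv]
    exact ⟨fun q hq => ⟨hrefl q hq, hrefl q hq⟩, fun p hp => ⟨hmove p hp, hmove p hp⟩⟩
  | one =>
    refine ⟨fun q hq => ⟨?_, ?_⟩, fun p hp => ⟨?_, ?_⟩⟩
    · rwa [one_apply']
    · rwa [inv_one, one_apply']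
    · rw [one_apply', sub_self]; exact zero_mem _
    · rw [inv_one, one_apply', sub_self]; exact zero_mem _
  | mul x y hx hy ihx ihy =>
    refine ⟨fun q hq => ⟨?_, ?_⟩, fun p hp => ⟨?_, ?_⟩⟩
    · rw [mul_apply']; exact (ihx.1 _ ((ihy.1 q hq).1)).1
    · rw [mul_inv_rev, mul_apply']; exact (ihy.1 _ ((ihx.1 q hq).2)).2
    · have h1 : p - (x * y) p = (p - x p) + x (p - y p) := by
        rw [mul_apply', map_sub]; abel
      rw [h1]
      exact add_mem (ihx.2 p hp).1 ((ihx.1 _ (ihy.2 p hp).1).1)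
    · have h1 : p - (x * y)⁻¹ p = (p - y⁻¹ p) + y⁻¹ (p - x⁻¹ p) := by
        rw [mul_inv_rev, mul_apply', map_sub]; abel
      rw [h1]
      exact add_mem (ihy.2 p hp).2 ((ihy.1 _ (ihx.2 p hp).2).2)
  | inv x hx ihx =>
    refine ⟨fun q hq => ⟨(ihx.1 q hq).2, by rw [inv_inv]; exact (ihx.1 q hq).1⟩,
      fun p hp => ⟨(ihx.2 p hp).2, by rw [inv_inv]; exact (ihx.2 p hp).1⟩⟩

end RootSystemData

end Part5
section Part6

namespace RootSystemData

variable {V : Type*} [AddCommGroup V] [Module ℚ V] [FiniteDimensional ℚ V]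
  (RS : RootSystemData V) (Δ : Finset V)

lemma omega_mem_weightLattice (hΔ : RS.IsBase Δ) (i : {x // x ∈ Δ}) :
    RS.omega Δ hΔ i ∈ RS.weightLattice := by
  rw [mem_weightLattice_iff]
  intro β hβ
  apply RS.corootSpan_int_eval Δ _ _ (RS.coroot β) (RS.coroot_mem_corootSpan Δ hΔ hβ)
  intro a
  by_cases ha : a = i
  · subst ha; exact ⟨1, by rw [RS.coroot_omega_self Δ hΔ a]; norm_num⟩
  · exact ⟨0, by rw [RS.coroot_omega_ne Δ hΔ ha]; norm_num⟩

lemma listProd_fix (hΔ : RS.IsBase Δ) (t : List {x // x ∈ Δ}) (x : V)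
    (hx : ∀ b ∈ t, RS.coroot b.1 x = 0) :
    ((t.map (RS.sRefl Δ hΔ)).prod) x = x := by
  induction t with
  | nil => simp [one_apply']
  | cons b t ih =>
    rw [List.map_cons, List.prod_cons, mul_apply',
      ih fun b' hb' => hx b' (List.mem_cons_of_mem b hb'),
      RS.sRefl_apply Δ hΔ b x, hx b (List.mem_cons_self), zero_smul, sub_zero]

lemma listProd_sub_mem_span (hΔ : RS.IsBase Δ) (t : List {x // x ∈ Δ}) (x : V) :
    ((t.map (RS.sRefl Δ hΔ)).prod) x - x ∈
      Submodule.span ℚ {v : V | ∃ b ∈ t, b.1 = v} := by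
  induction t with
  | nil => simp [one_apply']
  | cons b t ih =>
    rw [List.map_cons, List.prod_cons, mul_apply']
    have heq : RS.sRefl Δ hΔ b (((t.map (RS.sRefl Δ hΔ)).prod) x) - x
        = (((t.map (RS.sRefl Δ hΔ)).prod) x - x)
          - RS.coroot b.1 (((t.map (RS.sRefl Δ hΔ)).prod) x) • b.1 := by
      rw [RS.sRefl_apply]; abel
    rw [heq]
    refine sub_mem (Submodule.span_mono ?_ ih) (Submodule.smul_mem _ _ (Submodule.subset_span ?_))
    · rintro v ⟨b', hb', rfl⟩
      exact ⟨b', List.mem_cons_of_mem b hb', rfl⟩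
    · exact ⟨b, List.mem_cons_self, rfl⟩

lemma listProd_sub_mem_closure (hΔ : RS.IsBase Δ) (t : List {x // x ∈ Δ}) (q : V)
    (hq : q ∈ RS.rootLattice) :
    ((t.map (RS.sRefl Δ hΔ)).prod) q - q ∈
      AddSubgroup.closure {v : V | ∃ b ∈ t, b.1 = v} := by
  induction t with
  | nil => simp [one_apply']
  | cons b t ih =>
    rw [List.map_cons, List.prod_cons, mul_apply']
    set u := (t.map (RS.sRefl Δ hΔ)).prod with hu
    have huq : u q ∈ RS.rootLattice :=
      ((RS.weylGroup_lattice u (RS.listProd_mem_weylGroup Δ hΔ t)).1 q hq).1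
    obtain ⟨m, hm⟩ := RS.coroot_int_on_rootLattice (hΔ.subset b.2) (u q) huq
    have heq : RS.sRefl Δ hΔ b (u q) - q = (u q - q) - (m : ℤ) • b.1 := by
      rw [RS.sRefl_apply, hm, Int.cast_smul_eq_zsmul]; abel
    rw [heq]
    refine sub_mem (AddSubgroup.closure_mono ?_ ih)
      (zsmul_mem (AddSubgroup.subset_closure ?_) m)
    · rintro v ⟨b', hb', rfl⟩
      exact ⟨b', List.mem_cons_of_mem b hb', rfl⟩
    · exact ⟨b, List.mem_cons_self, rfl⟩

lemma listProd_fixed_coroot_zero (hΔ : RS.IsBase Δ) : ∀ t : List {x // x ∈ Δ}, t.Nodup →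
    ∀ x : V, ((t.map (RS.sRefl Δ hΔ)).prod) x = x → ∀ b ∈ t, RS.coroot b.1 x = 0 := by
  intro t
  induction t with
  | nil => intro _ x _ b hb; exact absurd hb List.not_mem_nil
  | cons a r ih =>
    intro hnd x hx b hb
    obtain ⟨hnotmem, hndr⟩ := List.nodup_cons.mp hnd
    set u := (r.map (RS.sRefl Δ hΔ)).prod with hu
    have hux : RS.sRefl Δ hΔ a (u x) = x := by
      rw [List.map_cons, List.prod_cons, mul_apply'] at hx
      exact hx
    set y := u x with hy
    have hspan : y - x ∈ Submodule.span ℚ {v : V | ∃ b ∈ r, b.1 = v} :=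
      RS.listProd_sub_mem_span Δ hΔ r x
    have heq : y - x = RS.coroot a.1 y • a.1 := by
      rw [← hux, RS.sRefl_apply]
      abel
    -- apply the coordinate functional at `a`
    set φ := (RS.baseBasis Δ hΔ).coord a with hφ
    have hφa : φ a.1 = 1 := by
      rw [hφ, ← RS.baseBasis_apply Δ hΔ a, Basis.coord_apply, Basis.repr_self,
        Finsupp.single_eq_same]
    have hφr : Submodule.span ℚ {v : V | ∃ b ∈ r, b.1 = v} ≤ LinearMap.ker φ := by
      rw [Submodule.span_le]
      rintro v ⟨c, hc, rfl⟩
      have hca : c ≠ a := fun h => hnotmem (h ▸ hc)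
      have : φ c.1 = 0 := by
        rw [hφ, ← RS.baseBasis_apply Δ hΔ c, Basis.coord_apply, Basis.repr_self,
          Finsupp.single_eq_of_ne' hca]
      simpa [LinearMap.mem_ker] using this
    have hφ0 : φ (y - x) = 0 := hφr hspan
    rw [heq, map_smul, smul_eq_mul, hφa, mul_one] at hφ0
    have hfix : y = x := by
      have h2 := heq
      rw [hφ0, zero_smul, sub_eq_zero] at h2
      exact h2
    rcases List.mem_cons.mp hb with hba | hbr
    · subst hba
      rw [← hfix]; exact hφ0
    · exact ih hndr x (by rw [← hy, hfix]) b hbr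

end RootSystemData

end Part6
theorem RootSystemData.bijOn_id_sub_coxeterElement'
    {V : Type*} [AddCommGroup V] [Module ℚ V] [FiniteDimensional ℚ V]
    (RS : RootSystemData V)
    (c : V ≃ₗ[ℚ] V) (hc : RS.IsCoxeterElement c) :
    Set.BijOn (fun x : V => x - c x) (RS.weightLattice : Set V) (RS.rootLattice : Set V) ∧
    ∀ q ∈ RS.rootLattice, ∃! p, p ∈ RS.weightLattice ∧ q = p - c p := by
  classical
  obtain ⟨Δ, hΔ, l, hnd, hall, hceq⟩ := hc
  have hceq' : c = (l.map (RS.sRefl Δ hΔ)).prod := hceq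
  have hcW : c ∈ RS.weylGroup := by
    rw [hceq']; exact RS.listProd_mem_weylGroup Δ hΔ l
  -- injectivity of `x ↦ x - c x`
  have hinj : Function.Injective (fun x : V => x - c x) := by
    intro x y hxy
    simp only at hxy
    have h0 : (x - y) - c (x - y) = 0 := by
      calc (x - y) - c (x - y) = (x - c x) - (y - c y) := by rw [map_sub]; abel
        _ = 0 := by rw [hxy]; simp
    have hz : ((l.map (RS.sRefl Δ hΔ)).prod) (x - y) = x - y := by
      rw [← hceq']
      rw [sub_eq_zero] at h0
      exact h0.symm
    have hcz := RS.listProd_fixed_coroot_zero Δ hΔ l hnd (x - y) hz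
    have hzero : x - y = 0 := by
      apply RS.corootPi_injective Δ hΔ
      rw [map_zero]
      funext i
      show RS.coroot i.1 (x - y) = 0
      exact hcz i (hall i)
    exact sub_eq_zero.mp hzero
  -- the image subgroup
  set Im := AddSubgroup.map ((LinearMap.id : V →ₗ[ℚ] V) - (c : V →ₗ[ℚ] V)).toAddMonoidHom
    RS.weightLattice with hIm
  have happ : ∀ p : V, ((LinearMap.id : V →ₗ[ℚ] V) - (c : V →ₗ[ℚ] V)).toAddMonoidHom p
      = p - c p := fun p => rfl
  -- the simple roots lie in the image, by induction along the list
  have hsimple : ∀ k : ℕ, ∀ a ∈ l.take k, (a.1 : V) ∈ Im := by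
    intro k
    induction k with
    | zero => intro a ha; simp at ha
    | succ k ihk =>
      intro a ha
      by_cases hk : k < l.length
      · rw [List.take_succ] at ha
        rcases List.mem_append.mp ha with h1 | h2
        · exact ihk a h1
        · have ha0 : a = l[k] := by
            rw [List.getElem?_eq_getElem hk] at h2
            simpa using h2
          subst ha0
          set pre := l.take k with hpre
          set suf := l.drop (k+1) with hsuf
          have hl : l = pre ++ l[k] :: suf := by
            rw [hpre, hsuf, ← List.drop_eq_getElem_cons hk, List.take_append_drop]
          have hnd2 : (pre ++ l[k] :: suf).Nodup := hl ▸ hnd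
          obtain ⟨hndpre, hndcons, hdisj⟩ := List.nodup_append'.mp hnd2
          have hanotsuf : l[k] ∉ suf := (List.nodup_cons.mp hndcons).1
          have hanotpre : l[k] ∉ pre := fun hmem => (hdisj hmem) List.mem_cons_self
          set ω := RS.omega Δ hΔ l[k] with hω
          have hωP := RS.omega_mem_weightLattice Δ hΔ l[k]
          set P1 := ((pre.map (RS.sRefl Δ hΔ)).prod) with hP1
          have hcω : c ω = ω - P1 l[k].1 := by
            rw [hceq']
            conv_lhs => rw [hl]
            rw [List.map_append, List.prod_append, List.map_cons, List.prod_cons,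
              mul_apply', mul_apply',
              RS.listProd_fix Δ hΔ suf ω
                (fun b hb => RS.coroot_omega_ne Δ hΔ (fun h => hanotsuf (h ▸ hb))),
              RS.sRefl_apply Δ hΔ l[k] ω, RS.coroot_omega_self Δ hΔ l[k], one_smul,
              map_sub,
              RS.listProd_fix Δ hΔ pre ω
                (fun b hb => RS.coroot_omega_ne Δ hΔ (fun h => hanotpre (h ▸ hb)))]
          have h1 : ω - c ω ∈ Im := AddSubgroup.mem_map.mpr ⟨ω, hωP, happ ω⟩
          have h2 : P1 l[k].1 - l[k].1 ∈ AddSubgroup.closure {v : V | ∃ b ∈ pre, b.1 = v} :=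
            RS.listProd_sub_mem_closure Δ hΔ pre l[k].1
              (RS.roots_subset_rootLattice (hΔ.subset l[k].2))
          have h3 : AddSubgroup.closure {v : V | ∃ b ∈ pre, b.1 = v} ≤ Im := by
            rw [AddSubgroup.closure_le]
            rintro v ⟨b, hb, rfl⟩
            exact ihk b hb
          have hfin : (l[k].1 : V) = (ω - c ω) - (P1 l[k].1 - l[k].1) := by
            rw [hcω]; abel
          rw [hfin]
          exact sub_mem h1 (h3 h2)
      · push_neg at hk
        have htake : l.take (k+1) = l.take k := by
          rw [List.take_of_length_le hk, List.take_of_length_le (le_trans hk (Nat.le_succ k))]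
        rw [htake] at ha
        exact ihk a ha
  have hsimple' : ∀ a : {x // x ∈ Δ}, (a.1 : V) ∈ Im := by
    intro a
    refine hsimple l.length a ?_
    rw [List.take_length]
    exact hall a
  -- all roots lie in the image
  have hroots : RS.roots ⊆ (Im : Set V) := by
    intro β hβ
    rcases hΔ.pos_or_neg β hβ with ⟨f, hf⟩ | ⟨f, hf⟩
    · rw [hf]
      refine AddSubgroup.sum_mem Im fun α hα => ?_
      rw [Nat.cast_smul_eq_nsmul]
      exact AddSubgroup.nsmul_mem Im (hsimple' ⟨α, hα⟩) _
    · rw [hf]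
      refine neg_mem (AddSubgroup.sum_mem Im fun α hα => ?_)
      rw [Nat.cast_smul_eq_nsmul]
      exact AddSubgroup.nsmul_mem Im (hsimple' ⟨α, hα⟩) _
  have hQIm : RS.rootLattice ≤ Im := by
    rw [show RS.rootLattice = AddSubgroup.closure RS.roots from rfl, AddSubgroup.closure_le]
    exact hroots
  -- assemble
  have hmaps : Set.MapsTo (fun x : V => x - c x)
      (RS.weightLattice : Set V) (RS.rootLattice : Set V) :=
    fun p hp => ((RS.weylGroup_lattice c hcW).2 p hp).1
  have hsurj : Set.SurjOn (fun x : V => x - c x)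
      (RS.weightLattice : Set V) (RS.rootLattice : Set V) := by
    intro q hq
    obtain ⟨p, hp, hpq⟩ := AddSubgroup.mem_map.mp (hQIm hq)
    exact ⟨p, hp, by rw [← hpq]; exact (happ p).symm⟩
  refine ⟨⟨hmaps, hinj.injOn, hsurj⟩, fun q hq => ?_⟩
  obtain ⟨p, hp, hpq⟩ := hsurj hq
  refine ⟨p, ⟨hp, hpq.symm⟩, ?_⟩
  rintro p' ⟨hp', hq'⟩
  apply hinj
  show p' - c p' = p - c p
  rw [← hq']
  exact hpq.symm

/-- Assume the root system is irreducible and let `c` be a Coxeter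
element of the Weyl group.  Then `id_V - c` restricts to a bijection from the weight
lattice `P` onto the root lattice `Q`; in particular every `q ∈ Q` is of the form
`q = p - c(p)` for a unique `p ∈ P`. -/
theorem RootSystemData.bijOn_id_sub_coxeterElement
    {V : Type*} [AddCommGroup V] [Module ℚ V] [FiniteDimensional ℚ V]
    (RS : RootSystemData V) (hirr : RS.IsIrreducible)
    (c : V ≃ₗ[ℚ] V) (hc : RS.IsCoxeterElement c) :
    Set.BijOn (fun x : V => x - c x) (RS.weightLattice : Set V) (RS.rootLattice : Set V) ∧
    ∀ q ∈ RS.rootLattice, ∃! p, p ∈ RS.weightLattice ∧ q = p - c p := by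
  exact RS.bijOn_id_sub_coxeterElement' c hc
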